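/- If H₁, H₂, V₁, V₂ are dual unitary two-site gates, then the layered plaquette gate U = V * H built from them is ternary unitary. -/

import Mathlib

open Matrix
open scoped Kronecker

/-- A matrix is unitary if it is inverted by its conjugate transpose on both sides. -/
def IsUnitary {n : Type*} [Fintype n] [DecidableEq n] (M : Matrix n n ℂ) : Prop :=
  M * Mᴴ = 1 ∧ Mᴴ * M = 1

/-- Index type of a four-site gate. -/
abbrev FourIdx (d : ℕ) := Fin d × Fin d × Fin d × Fin d

/-- Index type of a two-site gate. -/
abbrev TwoIdx (d : ℕ) := Fin d × Fin d

/-- The x₁-reshuffle of a four-site gate. -/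
def reshuffle1 {d : ℕ} (U : Matrix (FourIdx d) (FourIdx d) ℂ) :
    Matrix (FourIdx d) (FourIdx d) ℂ :=
  Matrix.of fun r c => U (c.1, r.1, c.2.1, r.2.1) (c.2.2.1, r.2.2.1, c.2.2.2, r.2.2.2)

/-- The x₂-reshuffle of a four-site gate. -/
def reshuffle2 {d : ℕ} (U : Matrix (FourIdx d) (FourIdx d) ℂ) :
    Matrix (FourIdx d) (FourIdx d) ℂ :=
  Matrix.of fun r c => U (c.1, c.2.1, r.1, r.2.1) (c.2.2.1, c.2.2.2, r.2.2.1, r.2.2.2)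

/-- A four-site gate is ternary unitary if it and both of its spatial reshuffles are unitary. -/
def TernaryUnitary {d : ℕ} (U : Matrix (FourIdx d) (FourIdx d) ℂ) : Prop :=
  IsUnitary U ∧ IsUnitary (reshuffle1 U) ∧ IsUnitary (reshuffle2 U)

/-- Reshuffle of a two-site gate: `D̃[(a₂,a₄),(a₁,a₃)] = D[(a₁,a₂),(a₃,a₄)]`. -/
def reshuffleD {d : ℕ} (D : Matrix (TwoIdx d) (TwoIdx d) ℂ) : Matrix (TwoIdx d) (TwoIdx d) ℂ :=
  Matrix.of fun r c => D (c.1, r.1) (c.2, r.2)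

/-- A two-site gate is dual unitary if it and its reshuffle are unitary. -/
def DualUnitary {d : ℕ} (D : Matrix (TwoIdx d) (TwoIdx d) ℂ) : Prop :=
  IsUnitary D ∧ IsUnitary (reshuffleD D)

/-- The layered plaquette gate `U = V * H` built from horizontal gates `H₁, H₂`
and vertical gates `V₁, V₂`. -/
noncomputable def layered {d : ℕ} (H1 H2 V1 V2 : Matrix (TwoIdx d) (TwoIdx d) ℂ) :
    Matrix (FourIdx d) (FourIdx d) ℂ :=
  (Matrix.of fun a b : FourIdx d =>
      V1 (a.1, a.2.2.1) (b.1, b.2.2.1) * V2 (a.2.1, a.2.2.2) (b.2.1, b.2.2.2)) *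
  (Matrix.of fun a b : FourIdx d =>
      H1 (a.1, a.2.1) (b.1, b.2.1) * H2 (a.2.2.1, a.2.2.2) (b.2.2.1, b.2.2.2))

section Helpers

variable {n : Type*} [Fintype n] [DecidableEq n]

lemma IsUnitary.one' : IsUnitary (1 : Matrix n n ℂ) := by simp [IsUnitary]

lemma IsUnitary.mul' {M N : Matrix n n ℂ} (hM : IsUnitary M) (hN : IsUnitary N) :
    IsUnitary (M * N) := by
  constructor
  · rw [conjTranspose_mul, Matrix.mul_assoc, ← Matrix.mul_assoc N, hN.1, Matrix.one_mul, hM.1]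
  · rw [conjTranspose_mul, Matrix.mul_assoc, ← Matrix.mul_assoc Mᴴ, hM.2, Matrix.one_mul, hN.2]

lemma IsUnitary.transpose' {M : Matrix n n ℂ} (hM : IsUnitary M) : IsUnitary Mᵀ := by
  constructor
  · have := congrArg Matrix.transpose hM.2
    simpa [Matrix.transpose_mul, Matrix.conjTranspose, Matrix.transpose_map] using this
  · have := congrArg Matrix.transpose hM.1
    simpa [Matrix.transpose_mul, Matrix.conjTranspose, Matrix.transpose_map] using this

omit [Fintype n] [DecidableEq n] in
lemma kron_conjTranspose' {m : Type*}
    (A : Matrix n n ℂ) (B : Matrix m m ℂ) : (A ⊗ₖ B)ᴴ = Aᴴ ⊗ₖ Bᴴ := by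
  ext ⟨i, j⟩ ⟨k, l⟩
  simp [conjTranspose_apply, kroneckerMap_apply, mul_comm]

lemma IsUnitary.kron' {m : Type*} [Fintype m] [DecidableEq m]
    {A : Matrix n n ℂ} {B : Matrix m m ℂ} (hA : IsUnitary A) (hB : IsUnitary B) :
    IsUnitary (A ⊗ₖ B) := by
  constructor
  · rw [kron_conjTranspose', ← mul_kronecker_mul, hA.1, hB.1, one_kronecker_one]
  · rw [kron_conjTranspose', ← mul_kronecker_mul, hA.2, hB.2, one_kronecker_one]

lemma IsUnitary.submatrix' {m : Type*} [Fintype m] [DecidableEq m]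
    {M : Matrix n n ℂ} (hM : IsUnitary M) (e₁ e₂ : m ≃ n) :
    IsUnitary (M.submatrix e₁ e₂) := by
  have h1 : (M.submatrix e₁ e₂)ᴴ = Mᴴ.submatrix e₂ e₁ := by
    ext i j; simp [conjTranspose_apply]
  constructor
  · rw [h1, Matrix.submatrix_mul_equiv, hM.1, Matrix.submatrix_one_equiv]
  · rw [h1, Matrix.submatrix_mul_equiv, hM.2, Matrix.submatrix_one_equiv]

lemma IsUnitary.kron_perm {α β γ : Type*} [Fintype α] [DecidableEq α] [Fintype β] [DecidableEq β]
    [Fintype γ] [DecidableEq γ]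
    {A : Matrix α α ℂ} {B : Matrix β β ℂ} (hA : IsUnitary A) (hB : IsUnitary B)
    (e₁ e₂ : γ ≃ α × β) :
    IsUnitary (Matrix.of fun x y => A (e₁ x).1 (e₂ y).1 * B (e₁ x).2 (e₂ y).2) := by
  have h : (Matrix.of fun x y => A (e₁ x).1 (e₂ y).1 * B (e₁ x).2 (e₂ y).2)
      = (A ⊗ₖ B).submatrix e₁ e₂ := by
    ext x y; simp [kroneckerMap_apply]
  rw [h]
  exact (hA.kron' hB).submatrix' e₁ e₂

/-- equiv grouping legs (1,2) and (3,4). -/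
def eq12 {d : ℕ} : FourIdx d ≃ TwoIdx d × TwoIdx d where
  toFun x := ((x.1, x.2.1), (x.2.2.1, x.2.2.2))
  invFun p := (p.1.1, p.1.2, p.2.1, p.2.2)
  left_inv := fun _ => rfl
  right_inv := fun _ => rfl

/-- equiv grouping legs (1,3) and (2,4). -/
def eq13 {d : ℕ} : FourIdx d ≃ TwoIdx d × TwoIdx d where
  toFun x := ((x.1, x.2.2.1), (x.2.1, x.2.2.2))
  invFun p := (p.1.1, p.2.1, p.1.2, p.2.2)
  left_inv := fun _ => rfl
  right_inv := fun _ => rfl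

/-- equiv grouping legs (3,4) and (1,2). -/
def eq34 {d : ℕ} : FourIdx d ≃ TwoIdx d × TwoIdx d where
  toFun x := ((x.2.2.1, x.2.2.2), (x.1, x.2.1))
  invFun p := (p.2.1, p.2.2, p.1.1, p.1.2)
  left_inv := fun _ => rfl
  right_inv := fun _ => rfl

/-- equiv grouping legs (3,1) and (4,2). -/
def eq31 {d : ℕ} : FourIdx d ≃ TwoIdx d × TwoIdx d where
  toFun x := ((x.2.2.1, x.1), (x.2.2.2, x.2.1))
  invFun p := (p.1.2, p.2.2, p.1.1, p.2.1)
  left_inv := fun _ => rfl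
  right_inv := fun _ => rfl

end Helpers

/-- The layered plaquette gate built from four dual unitary gates is ternary unitary. -/
theorem layered_ternaryUnitary (d : ℕ) (hd : 1 ≤ d)
    (H1 H2 V1 V2 : Matrix (TwoIdx d) (TwoIdx d) ℂ)
    (hH1 : DualUnitary H1) (hH2 : DualUnitary H2)
    (hV1 : DualUnitary V1) (hV2 : DualUnitary V2) :
    TernaryUnitary (layered H1 H2 V1 V2) := by
  refine ⟨?_, ?_, ?_⟩
  · -- U itself
    exact (hV1.1.kron_perm hV2.1 eq13 eq13).mul' (hH1.1.kron_perm hH2.1 eq12 eq12)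
  · -- reshuffle1
    have key : reshuffle1 (layered H1 H2 V1 V2) =
        (Matrix.of fun x y : FourIdx d =>
          V2 ((eq12 x).1) ((eq12 y).1) *
            (1 : Matrix (TwoIdx d) (TwoIdx d) ℂ) ((eq12 x).2) ((eq12 y).2)) *
        (Matrix.of fun x y : FourIdx d =>
          reshuffleD H1 ((eq13 x).1) ((eq13 y).1) * reshuffleD H2 ((eq13 x).2) ((eq13 y).2)) *
        (Matrix.of fun x y : FourIdx d =>
          V1ᵀ ((eq12 x).1) ((eq12 y).1) *
            (1 : Matrix (TwoIdx d) (TwoIdx d) ℂ) ((eq12 x).2) ((eq12 y).2)) := by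
      ext ⟨r1, r2, r3, r4⟩ ⟨c1, c2, c3, c4⟩
      simp only [reshuffle1, layered, reshuffleD, eq12, eq13, Equiv.coe_fn_mk,
        Matrix.mul_apply, Matrix.of_apply, Matrix.one_apply, Matrix.transpose_apply,
        Fintype.sum_prod_type, Prod.mk.injEq, mul_ite, ite_mul, mul_one, mul_zero, zero_mul,
        Finset.sum_ite_irrel, Finset.sum_ite_eq, Finset.sum_ite_eq', Finset.mem_univ, if_true,
        Finset.sum_mul, Finset.mul_sum]
      simp only [ite_and, Finset.sum_ite_irrel, Finset.sum_ite_eq, Finset.sum_ite_eq',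
        Finset.mem_univ, if_true, Finset.sum_const_zero]
      refine Finset.sum_congr rfl fun b1 _ => ?_
      rw [Finset.sum_comm]
      exact Finset.sum_congr rfl fun b3 _ => Finset.sum_congr rfl fun b2 _ =>
        Finset.sum_congr rfl fun b4 _ => by ring
    rw [key]
    exact ((hV2.1.kron_perm IsUnitary.one' eq12 eq12).mul'
      (hH1.2.kron_perm hH2.2 eq13 eq13)).mul'
      (hV1.1.transpose'.kron_perm IsUnitary.one' eq12 eq12)
  · -- reshuffle2
    have key : reshuffle2 (layered H1 H2 V1 V2) =
        (Matrix.of fun x y : FourIdx d =>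
          H2ᵀ ((eq34 x).1) ((eq12 y).1) *
            (1 : Matrix (TwoIdx d) (TwoIdx d) ℂ) ((eq34 x).2) ((eq12 y).2)) *
        (Matrix.of fun x y : FourIdx d =>
          reshuffleD V1 ((eq31 x).1) ((eq31 y).1) * reshuffleD V2 ((eq31 x).2) ((eq31 y).2)) *
        (Matrix.of fun x y : FourIdx d =>
          H1 ((eq12 x).1) ((eq34 y).1) *
            (1 : Matrix (TwoIdx d) (TwoIdx d) ℂ) ((eq12 x).2) ((eq34 y).2)) := by
      ext ⟨r1, r2, r3, r4⟩ ⟨c1, c2, c3, c4⟩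
      simp only [reshuffle2, layered, reshuffleD, eq12, eq34, eq31, Equiv.coe_fn_mk,
        Matrix.mul_apply, Matrix.of_apply, Matrix.one_apply, Matrix.transpose_apply,
        Fintype.sum_prod_type, Prod.mk.injEq, mul_ite, ite_mul, mul_one, mul_zero, zero_mul,
        Finset.sum_ite_irrel, Finset.sum_ite_eq, Finset.sum_ite_eq', Finset.mem_univ, if_true,
        Finset.sum_mul, Finset.mul_sum]
      simp only [ite_and, Finset.sum_ite_irrel, Finset.sum_ite_eq, Finset.sum_ite_eq',
        Finset.mem_univ, if_true, Finset.sum_const_zero]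
      exact Finset.sum_congr rfl fun _ _ => Finset.sum_congr rfl fun _ _ => Finset.sum_congr rfl fun _ _ => Finset.sum_congr rfl fun _ _ => by ring
    rw [key]
    exact ((hH2.1.transpose'.kron_perm IsUnitary.one' eq34 eq12).mul'
      (hV1.2.kron_perm hV2.2 eq31 eq31)).mul'
      (hH1.1.kron_perm IsUnitary.one' eq12 eq34)
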